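/- arXiv:2405.20647 — 3 statements merged into one kernel-verified Lean document; each statement's English description precedes it below -/
import Mathlib

section
/- Let (A,m) be a Noetherian local ring, I an ideal of A, and F = {I_n}_{n≥0} an I-stable filtration. Set R = ⊕_{n≥0} I^n t^n, G_F(A) = ⊕_{n≥0} I_n/I_{n+1}, and L^F(A) = ⊕_{n≥0} A/I_{n+1}, the latter two viewed as graded R-modules. Then Ass_R(G_F(A)) = Ass_R(L^F(A)). -/
open IsLocalRing Filter Polynomial

noncomputable section
set_option synthInstance.maxHeartbeats 1000000
set_option maxHeartbeats 2000000
set_option linter.unusedVariables false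

/-- An `I`-stable filtration of ideals: `I₀ = A`, decreasing, `I ⊆ I₁ ≠ A`,
`Iₙ·Iₘ ⊆ Iₙ₊ₘ`, and `I·Iₙ = Iₙ₊₁` for all large `n`. -/
structure IStableFiltration {A : Type} [CommRing A] (I : Ideal A) where
  N : ℕ → Ideal A
  N_zero : N 0 = ⊤
  antitone : ∀ n, N (n + 1) ≤ N n
  le_one : I ≤ N 1
  one_ne_top : N 1 ≠ ⊤
  mul_le : ∀ m n, N m * N n ≤ N (m + n)
  stable : ∃ n₀, ∀ n ≥ n₀, I * N n = N (n + 1)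

theorem IStableFiltration.pow_le {A : Type} [CommRing A] {I : Ideal A}
    (F : IStableFiltration I) : ∀ i, I ^ i ≤ F.N i := by
  intro i
  induction i with
  | zero => simp [F.N_zero]
  | succ k ih =>
      rw [pow_succ]
      calc I ^ k * I ≤ F.N k * F.N 1 := Ideal.mul_mono ih F.le_one
        _ ≤ F.N (k + 1) := F.mul_le k 1

/-- The Rees module `R(F) = ⊕ₙ Iₙtⁿ` of a filtration, as a module over the
Rees algebra of `I`: polynomials whose `n`-th coefficient lies in `Iₙ`. -/
def filtRees {A : Type} [CommRing A] {I : Ideal A} (F : IStableFiltration I) :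
    Submodule (reesAlgebra I) (Polynomial A) where
  carrier := {f | ∀ n, f.coeff n ∈ F.N n}
  add_mem' := by
    intro a b ha hb n
    rw [Polynomial.coeff_add]
    exact add_mem (ha n) (hb n)
  zero_mem' := by intro n; simp
  smul_mem' := by
    intro r f hf n
    have hr : ∀ i, (r : Polynomial A).coeff i ∈ I ^ i :=
      (mem_reesAlgebra_iff I (r : Polynomial A)).mp r.2
    have hrf : r • f = (r : Polynomial A) * f := rfl
    show (r • f).coeff n ∈ F.N n
    rw [hrf, Polynomial.coeff_mul]
    apply Submodule.sum_mem
    rintro ⟨i, j⟩ hij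
    have hij' : i + j = n := Finset.HasAntidiagonal.mem_antidiagonal.mp hij
    subst hij'
    exact F.mul_le i j (Ideal.mul_mem_mul (F.pow_le i (hr i)) (hf j))

/-- The shifted Rees module `⊕ₙ Iₙ₊₁tⁿ` (coefficients in `Iₙ₊₁`). -/
def filtReesShift {A : Type} [CommRing A] {I : Ideal A} (F : IStableFiltration I) :
    Submodule (reesAlgebra I) (Polynomial A) where
  carrier := {f | ∀ n, f.coeff n ∈ F.N (n + 1)}
  add_mem' := by
    intro a b ha hb n
    rw [Polynomial.coeff_add]
    exact add_mem (ha n) (hb n)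
  zero_mem' := by intro n; simp
  smul_mem' := by
    intro r f hf n
    have hr : ∀ i, (r : Polynomial A).coeff i ∈ I ^ i :=
      (mem_reesAlgebra_iff I (r : Polynomial A)).mp r.2
    have hrf : r • f = (r : Polynomial A) * f := rfl
    show (r • f).coeff n ∈ F.N (n + 1)
    rw [hrf, Polynomial.coeff_mul]
    apply Submodule.sum_mem
    rintro ⟨i, j⟩ hij
    have hij' : i + j = n := Finset.HasAntidiagonal.mem_antidiagonal.mp hij
    have h2 : i + (j + 1) = n + 1 := by omega
    exact h2 ▸ F.mul_le i (j + 1) (Ideal.mul_mem_mul (F.pow_le i (hr i)) (hf j))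

/-- `L^F(A) = ⊕ₙ A/Iₙ₊₁` as a module over the Rees algebra `R = R(I)`, arising from the
exact sequence `0 → R(F) → A[t] → L^F(A)(−1) → 0`. -/
abbrev filtL {A : Type} [CommRing A] {I : Ideal A} (F : IStableFiltration I) :=
  Polynomial A ⧸ filtRees F

/-- `G_F(A) = ⊕ₙ Iₙ/Iₙ₊₁` as a module over the Rees algebra `R = R(I)`:
the image of `R(F)` in `A[t]/(⊕ₙ Iₙ₊₁tⁿ)`. -/
noncomputable abbrev filtG {A : Type} [CommRing A] {I : Ideal A} (F : IStableFiltration I) :=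
  Submodule.map (filtReesShift F).mkQ (filtRees F)


section Aux

variable {A : Type} [CommRing A] {I : Ideal A} (F : IStableFiltration I)

lemma filtReesShift_le : filtReesShift F ≤ filtRees F :=
  fun f hf n => F.antitone n (hf n)

/-- Multiplication by `X` as a `reesAlgebra I`-linear map on `A[X]`. -/
def mulXaux : Polynomial A →ₗ[reesAlgebra I] Polynomial A where
  toFun f := Polynomial.X * f
  map_add' a b := mul_add _ a b
  map_smul' r f := by
    have h1 : r • f = (r : Polynomial A) * f := rfl
    have h2 : r • (Polynomial.X * f) = (r : Polynomial A) * (Polynomial.X * f) := rfl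
    simp only [RingHom.id_apply, h1, h2]
    ring

lemma C_mem_filtRees (c : A) : Polynomial.C c ∈ filtRees F := by
  intro n
  cases n with
  | zero => simp [F.N_zero]
  | succ m => simp [Polynomial.coeff_C]

lemma mulXaux_le : filtReesShift F ≤ Submodule.comap mulXaux (filtRees F) := by
  intro f hf n
  show (Polynomial.X * f).coeff n ∈ F.N n
  cases n with
  | zero => simp
  | succ m => rw [Polynomial.coeff_X_mul]; exact hf m

/-- The map `A[X]/(⊕ Iₙ₊₁ tⁿ) → A[X]/(⊕ Iₙ tⁿ)` induced by multiplication by `X`. -/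
def phi0 : (Polynomial A ⧸ filtReesShift F) →ₗ[reesAlgebra I] filtL F :=
  Submodule.mapQ _ _ mulXaux (mulXaux_le F)

lemma phi0_mk_divX (f : Polynomial A) :
    phi0 F (Submodule.Quotient.mk f.divX) = Submodule.Quotient.mk f := by
  rw [phi0, Submodule.mapQ_apply]
  show Submodule.Quotient.mk (Polynomial.X * f.divX) = Submodule.Quotient.mk f
  rw [Submodule.Quotient.eq]
  have h : Polynomial.X * f.divX - f = -(Polynomial.C (f.coeff 0)) := by
    have := Polynomial.X_mul_divX_add f
    linear_combination this
  rw [h]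
  exact neg_mem (C_mem_filtRees F _)

lemma phi0_bijective : Function.Bijective (phi0 F) := by
  constructor
  · rw [← LinearMap.ker_eq_bot, eq_bot_iff]
    rintro x hx
    obtain ⟨f, rfl⟩ := Submodule.Quotient.mk_surjective _ x
    have hx' : (phi0 F) (Submodule.Quotient.mk f) = 0 := hx
    rw [phi0, Submodule.mapQ_apply] at hx'
    have : Submodule.Quotient.mk (p := filtRees F) (Polynomial.X * f) = 0 := hx'
    rw [Submodule.Quotient.mk_eq_zero] at this
    rw [Submodule.mem_bot, Submodule.Quotient.mk_eq_zero]
    intro n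
    have := this (n + 1)
    rwa [Polynomial.coeff_X_mul] at this
  · intro y
    obtain ⟨f, rfl⟩ := Submodule.Quotient.mk_surjective _ y
    exact ⟨Submodule.Quotient.mk f.divX, phi0_mk_divX F f⟩

/-- The isomorphism `A[X]/(⊕ Iₙ₊₁ tⁿ) ≃ A[X]/(⊕ Iₙ tⁿ)` of `reesAlgebra I`-modules. -/
def phiEquiv : (Polynomial A ⧸ filtReesShift F) ≃ₗ[reesAlgebra I] filtL F :=
  LinearEquiv.ofBijective (phi0 F) (phi0_bijective F)

/-- The natural projection `A[X]/(⊕ Iₙ₊₁ tⁿ) → A[X]/(⊕ Iₙ tⁿ)`. -/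
def qmap : (Polynomial A ⧸ filtReesShift F) →ₗ[reesAlgebra I] filtL F :=
  Submodule.mapQ _ _ LinearMap.id (filtReesShift_le F)

/-- The degree-lowering endomorphism `ψ` of `L = A[X]/(⊕ Iₙ₊₁ tⁿ)` with kernel `G_F(A)`. -/
def psiMap : Module.End (reesAlgebra I) (Polynomial A ⧸ filtReesShift F) :=
  (phiEquiv F).symm.toLinearMap ∘ₗ qmap F

lemma psiMap_mk (f : Polynomial A) :
    psiMap F (Submodule.Quotient.mk f) = Submodule.Quotient.mk f.divX := by
  show (phiEquiv F).symm (qmap F (Submodule.Quotient.mk f)) = _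
  rw [LinearEquiv.symm_apply_eq]
  show (Submodule.Quotient.mk (LinearMap.id f) : filtL F) = phiEquiv F _
  exact ((phi0_mk_divX F f).symm : _)

lemma psiMap_eq_zero_mem (z : Polynomial A ⧸ filtReesShift F) (hz : psiMap F z = 0) :
    z ∈ filtG F := by
  obtain ⟨f, rfl⟩ := Submodule.Quotient.mk_surjective _ z
  have h0 : (phiEquiv F).symm (qmap F (Submodule.Quotient.mk f)) = 0 := hz
  have h1 : qmap F (Submodule.Quotient.mk f) = 0 := by
    rwa [LinearEquiv.map_eq_zero_iff] at h0
  have h2 : (Submodule.Quotient.mk f : filtL F) = 0 := h1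
  rw [Submodule.Quotient.mk_eq_zero] at h2
  exact ⟨f, h2, rfl⟩

lemma psiMap_pow_eventually_zero (z : Polynomial A ⧸ filtReesShift F) :
    ∃ k, (psiMap F ^ k) z = 0 := by
  obtain ⟨f, rfl⟩ := Submodule.Quotient.mk_surjective _ z
  suffices h : ∀ n (f : Polynomial A), f.natDegree ≤ n →
      (psiMap F ^ (n + 1)) (Submodule.Quotient.mk f) = 0 by
    exact ⟨f.natDegree + 1, h f.natDegree f le_rfl⟩
  intro n
  induction n with
  | zero =>
    intro f hf
    have hC : f = Polynomial.C (f.coeff 0) := Polynomial.eq_C_of_natDegree_le_zero hf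
    rw [pow_one, psiMap_mk]
    rw [hC, Polynomial.divX_C]
    simp
  | succ m ih =>
    intro f hf
    have : psiMap F ^ (m + 1 + 1) = psiMap F ^ (m + 1) * psiMap F := pow_succ _ _
    rw [this, Module.End.mul_apply, psiMap_mk]
    apply ih
    rw [Polynomial.natDegree_divX_eq_natDegree_tsub_one]
    omega

end Aux

/-- `Ass_R(G_F(A)) = Ass_R(L^F(A))` for an `I`-stable filtration `F`, where `R` is the
Rees algebra of `I`. -/
theorem stmt2 (A : Type) [CommRing A] [IsLocalRing A] [IsNoetherianRing A]
    (I : Ideal A) (F : IStableFiltration I) :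
    associatedPrimes (reesAlgebra I) (filtG F) = associatedPrimes (reesAlgebra I) (filtL F) := by
  classical
  rw [← LinearEquiv.AssociatedPrimes.eq (phiEquiv F)]
  ext p
  constructor
  · intro hp
    exact hp.map_of_injective (filtG F).subtype (Submodule.injective_subtype _)
  · intro hp'
    haveI : IsNoetherianRing (reesAlgebra I) :=
      isNoetherianRing_of_fg (reesAlgebra.fg (IsNoetherian.noetherian I))
    obtain ⟨hp, x, hx⟩ := isAssociatedPrime_iff.mp hp'
    -- `P j` : the annihilator of `ψ^j x` is still `p`.
    set ψ := psiMap F with hψ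
    set P : ℕ → Prop := fun j =>
      p = (Submodule.span (reesAlgebra I) {(ψ ^ j) x}).annihilator with hP
    have hP0 : P 0 := by
      simp only [hP, pow_zero, Module.End.one_apply]
      rw [hx]; ext b
      rw [Submodule.mem_colon_singleton, Submodule.mem_bot, Submodule.mem_annihilator_span_singleton]
    obtain ⟨K, hK⟩ := psiMap_pow_eventually_zero F x
    have hPK : ¬ P K := by
      intro h
      rw [hP] at h
      rw [hK, Submodule.span_singleton_eq_bot.mpr rfl, Submodule.annihilator_bot] at h
      exact hp.ne_top h
    set j := Nat.findGreatest P K with hj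
    have hPj : P j := Nat.findGreatest_spec (Nat.zero_le K) hP0
    have hjK : j ≤ K := Nat.findGreatest_le K
    have hjltK : j < K := lt_of_le_of_ne hjK (fun h => hPK (h ▸ hPj))
    have hnot : ¬ P (j + 1) :=
      Nat.findGreatest_is_greatest (Nat.lt_succ_self j) hjltK
    -- p is contained in the annihilator of ψ^(j+1) x
    have hle : p ≤ (Submodule.span (reesAlgebra I) {(ψ ^ (j + 1)) x}).annihilator := by
      intro a ha
      rw [Submodule.mem_annihilator_span_singleton]
      have hax : a • x = 0 := by
        rw [hP] at hP0
        have := hP0 ▸ ha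
        rw [pow_zero] at this
        simpa [Submodule.mem_annihilator_span_singleton] using this
      rw [← map_smul, hax, map_zero]
    obtain ⟨a, haann, hap⟩ := SetLike.exists_of_lt (lt_of_le_of_ne hle hnot)
    rw [Submodule.mem_annihilator_span_singleton] at haann
    -- the element z := a • ψ^j x lies in G, is nonzero, and has annihilator p
    set y := (ψ ^ j) x with hy
    set z := a • y with hz
    have hmemy : ∀ b : reesAlgebra I, b • y = 0 ↔ b ∈ p := by
      intro b
      rw [hP] at hPj
      rw [hPj, Submodule.mem_annihilator_span_singleton]
    have hzG : z ∈ filtG F := by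
      apply psiMap_eq_zero_mem
      have hpow : ψ ((ψ ^ j) x) = (ψ ^ (j + 1)) x := by
        rw [pow_succ, Module.End.mul_apply, ← LinearMap.comp_apply, ← Module.End.mul_eq_comp,
          ← pow_succ', pow_succ, Module.End.mul_apply]
      calc psiMap F z = a • (ψ ((ψ ^ j) x)) := by rw [hz, map_smul]
        _ = a • ((ψ ^ (j + 1)) x) := by rw [hpow]
        _ = 0 := haann
    refine isAssociatedPrime_iff.mpr ⟨hp, ⟨z, hzG⟩, ?_⟩
    ext b
    rw [Submodule.mem_colon_singleton, Submodule.mem_bot]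
    have hbz : b • (⟨z, hzG⟩ : filtG F) = 0 ↔ b • z = 0 := by
      constructor
      · intro h; exact congrArg Subtype.val h
      · intro h; exact Subtype.ext h
    rw [hbz, hz, smul_smul]
    constructor
    · intro hb
      exact (hmemy (b * a)).mpr (Ideal.mul_mem_right a p hb)
    · intro hb
      exact (hp.mem_or_mem ((hmemy (b * a)).mp hb)).resolve_right hap

end
end

section
/- Let (A,m) be a Noetherian local ring of dimension d ≥ 1 with depth(A) > 0, and let I be a regular ideal of A (an ideal containing a nonzerodivisor). Let M be a finitely generated A-module with ann(M) = 0 such that M_p is a free A_p-module for every prime p ≠ m. If there exists l ≥ 1 such that r(I^n, M) = Ĩ^n for all n ≥ l, then r(I^n, M) = Ĩ^n for all n ≥ 1. -/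
open IsLocalRing Filter Polynomial

noncomputable section
set_option synthInstance.maxHeartbeats 1000000
set_option maxHeartbeats 2000000
set_option linter.unusedVariables false

/-- `A` is analytically unramified: its `m`-adic completion is reduced. -/
def AnalyticallyUnramified (A : Type) [CommRing A] [IsLocalRing A] : Prop :=
  IsReduced (AdicCompletion (maximalIdeal A) A)

/-- `depth A > 0`: the maximal ideal contains a nonzerodivisor. -/
def PosDepth (A : Type) [CommRing A] [IsLocalRing A] : Prop :=
  ∃ x ∈ maximalIdeal A, x ∈ nonZeroDivisors A

/-- `M` is free on the punctured spectrum: `M_p` is a free `A_p`-module for every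
prime `p ≠ m`. -/
def FreeOnPunctured (A : Type) [CommRing A] [IsLocalRing A]
    (M : Type) [AddCommGroup M] [Module A M] : Prop :=
  ∀ (P : Ideal A) (hP : P.IsPrime), P ≠ maximalIdeal A →
    Module.Free (Localization.AtPrime P) (LocalizedModule P.primeCompl M)

/-- `M` has rank one: `M_p ≅ A_p` for every minimal prime `p` of `A`. -/
def RankOne (A : Type) [CommRing A] (M : Type) [AddCommGroup M] [Module A M] : Prop :=
  ∀ (P : Ideal A) (hP : P.IsPrime), P ∈ minimalPrimes A →
    Nonempty ((LocalizedModule P.primeCompl M) ≃ₗ[Localization.AtPrime P] Localization.AtPrime P)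

/-- `r(I,M)`: the stable value of the ascending chain of ideals `(I^(n+1)M : I^n M)`. -/
noncomputable def rIM {A : Type} [CommRing A] (I : Ideal A) (M : Type)
    [AddCommGroup M] [Module A M] : Ideal A :=
  ⨆ n : ℕ, Submodule.colon (I ^ (n + 1) • (⊤ : Submodule A M)) (I ^ n • (⊤ : Submodule A M) : Submodule A M)

/-- The Ratliff–Rush closure `J̃` of an ideal `J`: the stable value of the ascending chain
`(J^(n+1) : J^n)`. -/
noncomputable def Ideal.ratliffRush {A : Type} [CommRing A] (J : Ideal A) : Ideal A :=
  ⨆ n : ℕ, Submodule.colon (J ^ (n + 1) : Ideal A) (J ^ n : Ideal A)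


section Aux

variable {A : Type} [CommRing A] {M : Type} [AddCommGroup M] [Module A M]

/-- The chain `(I^(n+k) M : I^k M)`. -/
def Fc (I : Ideal A) (M : Type) [AddCommGroup M] [Module A M] (n k : ℕ) : Ideal A :=
  Submodule.colon (I ^ (n + k) • (⊤ : Submodule A M)) (I ^ k • (⊤ : Submodule A M) : Submodule A M)

lemma Fc_mono (I : Ideal A) (n : ℕ) : Monotone (Fc I M n) := by
  apply monotone_nat_of_le_succ
  intro k x hx
  rw [Fc, Submodule.mem_colon] at hx ⊢
  intro p hp
  rw [pow_succ', mul_smul] at hp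
  refine Submodule.smul_induction_on hp ?_ ?_
  · intro a ha m hm
    rw [smul_comm]
    have h2 : a • x • m ∈ I • (I ^ (n + k) • (⊤ : Submodule A M)) :=
      Submodule.smul_mem_smul ha (hx m hm)
    rw [← mul_smul, ← pow_succ'] at h2
    exact h2
  · intro p q hp hq
    rw [smul_add]; exact Submodule.add_mem _ hp hq

/-- `rIM (I^n) M` is the union of the chain `(I^(n+k) M : I^k M)`. -/
lemma rIM_pow_eq (I : Ideal A) (n : ℕ) (hn : 1 ≤ n) :
    rIM (I ^ n) M = ⨆ k, Fc I M n k := by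
  have e : ∀ j : ℕ, Submodule.colon ((I ^ n) ^ (j + 1) • (⊤ : Submodule A M))
      ((I ^ n) ^ j • (⊤ : Submodule A M) : Submodule A M) = Fc I M n (n * j) := by
    intro j
    rw [Fc, ← pow_mul, ← pow_mul]
    congr 2
    ring
  rw [rIM]
  simp_rw [e]
  apply le_antisymm
  · exact iSup_le fun j => le_iSup (Fc I M n) (n * j)
  · refine iSup_le fun k => le_trans ?_ (le_iSup (fun j => Fc I M n (n * j)) k)
    exact Fc_mono I n (Nat.le_mul_of_pos_left k hn)

lemma mem_rIM_pow (I : Ideal A) (n : ℕ) (hn : 1 ≤ n) (x : A) :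
    x ∈ rIM (I ^ n) M ↔ ∃ k, x ∈ Fc I M n k := by
  rw [rIM_pow_eq I n hn, Submodule.mem_iSup_of_directed _ (Fc_mono I n).directed_le]

lemma ideal_smul_top (J : Ideal A) : J • (⊤ : Submodule A A) = J := by
  rw [Ideal.smul_eq_mul, Ideal.mul_top]

/-- The Ratliff–Rush closure is `rIM` with `M = A`. -/
lemma ratliffRush_eq_rIM (J : Ideal A) : J.ratliffRush = rIM J A := by
  rw [Ideal.ratliffRush, rIM]
  congr 1
  funext k
  rw [ideal_smul_top, ideal_smul_top]

lemma Fc_self (I : Ideal A) (n k : ℕ) :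
    Fc I A n k = Submodule.colon (I ^ (n + k) : Ideal A) (I ^ k : Ideal A) := by
  rw [Fc, ideal_smul_top, ideal_smul_top]

end Aux


/-- If `r(Iⁿ,M) = Ĩⁿ` for all `n ≥ l`, then `r(Iⁿ,M) = Ĩⁿ` for all `n ≥ 1`. -/
theorem stmt5 (A : Type) [CommRing A] [IsLocalRing A] [IsNoetherianRing A]
    (d : ℕ) (hd : 1 ≤ d) (hdim : ringKrullDim A = (d : WithBot ℕ∞))
    (hdepth : PosDepth A)
    (I : Ideal A) (hreg : ∃ x ∈ I, x ∈ nonZeroDivisors A)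
    (M : Type) [AddCommGroup M] [Module A M] [Module.Finite A M]
    (hann : Module.annihilator A M = ⊥)
    (hfree : FreeOnPunctured A M)
    (l : ℕ) (hl : 1 ≤ l) (h : ∀ n : ℕ, n ≥ l → rIM (I ^ n) M = (I ^ n).ratliffRush) :
    ∀ n : ℕ, 1 ≤ n → rIM (I ^ n) M = (I ^ n).ratliffRush := by
  intro n hn
  rcases le_or_gt l n with hln | hnl
  · exact h n hln
  have hnl' : n ≤ l := hnl.le
  apply le_antisymm
  · -- hard direction : rIM (I^n) M ≤ (I^n).ratliffRush
    intro x hx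
    obtain ⟨k, hk⟩ := (mem_rIM_pow I n hn x).1 hx
    -- stabilize the chain Fc I A l
    obtain ⟨J, hJ⟩ := (monotone_stabilizes_iff_noetherian.mpr
      (inferInstance : IsNoetherian A A)) ⟨Fc I A l, Fc_mono I l⟩
    have hsup : (⨆ j, Fc I A l j) = Fc I A l J := by
      apply le_antisymm
      · refine iSup_le fun j => ?_
        rcases le_total j J with hj | hj
        · exact Fc_mono I l hj
        · exact le_of_eq (hJ j hj).symm
      · exact le_iSup (Fc I A l) J
    -- step 1 : for y ∈ I^(l-n), x*y ∈ Fc I M l k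
    have step1 : ∀ y ∈ I ^ (l - n), x * y ∈ Fc I M l k := by
      intro y hy
      rw [Fc, Submodule.mem_colon]
      intro p hp
      have hxp : x • p ∈ I ^ (n + k) • (⊤ : Submodule A M) :=
        Submodule.mem_colon.1 hk p hp
      have h2 : y • x • p ∈ I ^ (l - n) • (I ^ (n + k) • (⊤ : Submodule A M)) :=
        Submodule.smul_mem_smul hy hxp
      rw [← mul_smul, ← pow_add] at h2
      have e : l - n + (n + k) = l + k := by omega
      rw [e] at h2
      rw [mul_comm x y, mul_smul]
      exact h2
    -- step 2 : for y ∈ I^(l-n), x*y ∈ Fc I A l J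
    have step2 : ∀ y ∈ I ^ (l - n), x * y ∈ Fc I A l J := by
      intro y hy
      have : x * y ∈ rIM (I ^ l) M := (mem_rIM_pow I l hl _).2 ⟨k, step1 y hy⟩
      rw [h l le_rfl, ratliffRush_eq_rIM, rIM_pow_eq I l hl, hsup] at this
      exact this
    -- conclusion : x ∈ Fc I A n (l - n + J)
    have hxF : x ∈ Fc I A n (l - n + J) := by
      rw [Fc_self, Submodule.mem_colon]
      intro p hp
      rw [pow_add] at hp
      have e : n + (l - n + J) = l + J := by omega
      rw [e]
      refine Submodule.mul_induction_on hp ?_ ?_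
      · intro y hy z hz
        have := Submodule.mem_colon.1 ((Fc_self I l J) ▸ step2 y hy) z hz
        rw [smul_eq_mul] at this ⊢
        rw [← mul_assoc]
        exact this
      · intro a b ha hb
        rw [smul_eq_mul, mul_add]
        exact Ideal.add_mem _ (by rw [← smul_eq_mul]; exact ha) (by rw [← smul_eq_mul]; exact hb)
    rw [ratliffRush_eq_rIM]
    exact (mem_rIM_pow I n hn x).2 ⟨l - n + J, hxF⟩
  · -- easy direction : (I^n).ratliffRush ≤ rIM (I^n) M
    intro x hx
    rw [ratliffRush_eq_rIM] at hx
    obtain ⟨k, hk⟩ := (mem_rIM_pow I n hn x).1 hx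
    rw [Fc_self, Submodule.mem_colon] at hk
    refine (mem_rIM_pow I n hn x).2 ⟨k, ?_⟩
    rw [Fc, Submodule.mem_colon]
    intro p hp
    refine Submodule.smul_induction_on hp ?_ ?_
    · intro a ha m hm
      rw [smul_comm, ← smul_assoc]
      have hxa : x • a ∈ I ^ (n + k) := hk a ha
      rw [smul_eq_mul] at hxa
      have : (a * x) • m ∈ I ^ (n + k) • (⊤ : Submodule A M) :=
        Submodule.smul_mem_smul (by rwa [mul_comm]) (Submodule.mem_top)
      simpa using this
    · intro p q hp hq
      rw [smul_add]
      exact Submodule.add_mem _ hp hq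


end
end

section
/- Let (A,m) be a Noetherian local ring of dimension d ≥ 1 and I an m-primary ideal of A. If G_I(A) is unmixed and equidimensional, then grade(I, A) > 0, i.e. I contains a nonzerodivisor of A. -/
open IsLocalRing Filter Polynomial

noncomputable section
set_option synthInstance.maxHeartbeats 1000000
set_option maxHeartbeats 2000000
set_option linter.unusedVariables false
set_option linter.unusedSectionVars false

/-- The associated graded ring `G_I(A) = ⊕ₙ Iⁿ/Iⁿ⁺¹` of `A` with respect to `I`,
realized as the quotient `R(I)/I·R(I)` of the Rees algebra. -/
abbrev assocGraded {A : Type} [CommRing A] (I : Ideal A) :=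
  (reesAlgebra I) ⧸ (Ideal.map (algebraMap A (reesAlgebra I)) I)

/-- The fiber cone `R(I)/m·R(I) = ⊕ₙ Iⁿ/m·Iⁿ`. -/
abbrev fiberCone (A : Type) [CommRing A] [IsLocalRing A] (I : Ideal A) :=
  (reesAlgebra I) ⧸ (Ideal.map (algebraMap A (reesAlgebra I)) (maximalIdeal A))

/-- The analytic spread `ℓ(I)`: the Krull dimension of the fiber cone. -/
noncomputable def analyticSpread (A : Type) [CommRing A] [IsLocalRing A] (I : Ideal A) :
    WithBot ℕ∞ :=
  ringKrullDim (fiberCone A I)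

/-- A ring `G` is unmixed and equidimensional (of dimension `d`) if `dim G/P = d`
for every associated prime `P` of `G` (as a module over itself). -/
def UnmixedEquidim (G : Type*) [CommRing G] (d : ℕ) : Prop :=
  ∀ P ∈ associatedPrimes G G, ringKrullDim (G ⧸ P) = (d : WithBot ℕ∞)

/-! ### Auxiliary lemmas -/

/-- If `x ≠ 0` is killed by `m ^ N`, then some nonzero `y` is killed by `m`. -/
private lemma killDown {A : Type} [CommRing A] (m : Ideal A) :
    ∀ N (x : A), x ≠ 0 → (∀ a ∈ m ^ N, a * x = 0) →
      ∃ y : A, y ≠ 0 ∧ ∀ a ∈ m, a * y = 0 := by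
  intro N
  induction N with
  | zero =>
    intro x hx h
    exact absurd (by simpa using h 1 (by simp)) hx
  | succ N ih =>
    intro x hx h
    by_cases hc : ∀ a ∈ m, a * x = 0
    · exact ⟨x, hx, hc⟩
    · push_neg at hc
      obtain ⟨a, ha, hax⟩ := hc
      refine ih (a * x) hax fun b hb => ?_
      have : b * a ∈ m ^ (N + 1) := by
        rw [pow_succ]
        exact Ideal.mul_mem_mul hb ha
      calc b * (a * x) = (b * a) * x := by ring
        _ = 0 := h _ this

/-- If `I` is `m`-primary and consists of zerodivisors, then some nonzero element of `A`
is killed by the maximal ideal. Uses the Lasker–Noether primary decomposition of `⊥`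
together with prime avoidance. -/
private lemma auxExistsY (A : Type) [CommRing A] [IsLocalRing A] [IsNoetherianRing A]
    (I : Ideal A) (hprimary : I.radical = maximalIdeal A)
    (hzd : ∀ a ∈ I, a ∉ nonZeroDivisors A) :
    ∃ y : A, y ≠ 0 ∧ ∀ a ∈ maximalIdeal A, a * y = 0 := by
  classical
  obtain ⟨s, hsinf, hsprim⟩ := Ideal.isLasker A A ⊥
  obtain ⟨t, hts, htinf, hmin⟩ := Ideal.decomposition_erase_inf hsinf
  have htprim : ∀ J ∈ t, J.IsPrimary := fun J hJ => hsprim (hts hJ)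
  have hsub : (I : Set A) ⊆ ⋃ Q ∈ (t : Set (Ideal A)), (Ideal.radical Q : Set A) := by
    intro a ha
    obtain ⟨z, hz⟩ := notMem_nonZeroDivisors_iff_right.mp (hzd a ha)
    have hz' : z ∉ (⊥ : Ideal A) := by simpa [Ideal.mem_bot] using hz.2
    rw [← htinf] at hz'
    have hex : ∃ Q ∈ t, z ∉ Q := by
      by_contra hcon
      push_neg at hcon
      exact hz' (Submodule.mem_finsetInf.mpr fun i hi => hcon i hi)
    obtain ⟨Q, hQt, hzQ⟩ := hex
    have hmem : z * a ∈ Q := hz.1 ▸ Q.zero_mem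
    have := ((Ideal.isPrimary_iff.mp (htprim Q hQt)).2 hmem).resolve_left hzQ
    exact Set.mem_biUnion hQt this
  obtain ⟨Q, hQt, hIQ⟩ :=
    (Ideal.subset_union_prime ⊥ ⊥ fun i hi _ _ => Ideal.isPrime_radical (htprim i hi)).mp hsub
  have hradm : Ideal.radical Q = maximalIdeal A := by
    refine le_antisymm
      (IsLocalRing.le_maximalIdeal (Ideal.isPrime_radical (htprim Q hQt)).ne_top) ?_
    rw [← hprimary]
    calc I.radical ≤ (Ideal.radical Q).radical := Ideal.radical_mono hIQ
      _ = Ideal.radical Q := Ideal.radical_idem _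
  have hner := hmin hQt
  obtain ⟨x, hx_in, hxQ⟩ := SetLike.not_le_iff_exists.mp hner
  obtain ⟨N, hN⟩ := Ideal.exists_radical_pow_le_of_fg Q (IsNoetherian.noetherian _)
  rw [hradm] at hN
  have hx0 : x ≠ 0 := fun h => hxQ (by simpa [h] using Q.zero_mem)
  have hkill : ∀ a ∈ (maximalIdeal A) ^ N, a * x = 0 := by
    intro a ha
    have hmem : a * x ∈ t.inf id := by
      refine Submodule.mem_finsetInf.mpr fun J hJ => ?_
      by_cases hJQ : J = Q
      · subst hJQ
        exact Ideal.mul_mem_right x _ (hN ha)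
      · have : x ∈ (id J : Ideal A) :=
          Submodule.mem_finsetInf.mp hx_in J (Finset.mem_erase.mpr ⟨hJQ, hJ⟩)
        exact Ideal.mul_mem_left _ _ this
    rw [htinf] at hmem
    exact Ideal.mem_bot.mp hmem
  exact killDown (maximalIdeal A) N x hx0 hkill

/-- The ideal of the Rees algebra of elements whose `n`-th coefficient lies in `I^(n+1)`. -/
private def auxJ {A : Type} [CommRing A] (I : Ideal A) : Ideal (reesAlgebra I) where
  carrier := { f | ∀ n, (f : A[X]).coeff n ∈ I ^ (n + 1) }
  add_mem' hf hg n := by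
    rw [Subalgebra.coe_add, coeff_add]
    exact Ideal.add_mem _ (hf n) (hg n)
  zero_mem' n := by simp
  smul_mem' r f hf := by
    intro n
    have hco : ((r • f : reesAlgebra I) : A[X]) = (r : A[X]) * (f : A[X]) := rfl
    rw [hco, coeff_mul]
    apply Ideal.sum_mem
    rintro ⟨i, j⟩ e
    have hij : i + j = n := Finset.HasAntidiagonal.mem_antidiagonal.mp e
    have h1 : (r : A[X]).coeff i ∈ I ^ i := r.2 i
    have h2 : (f : A[X]).coeff j ∈ I ^ (j + 1) := hf j
    have := Ideal.mul_mem_mul h1 h2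
    rwa [← pow_add, show i + (j + 1) = n + 1 by omega] at this

private lemma map_le_auxJ {A : Type} [CommRing A] (I : Ideal A) :
    Ideal.map (algebraMap A (reesAlgebra I)) I ≤ auxJ I := by
  rw [Ideal.map_le_iff_le_comap]
  intro a ha n
  have hco : ((algebraMap A (reesAlgebra I) a : reesAlgebra I) : A[X]) = C a := rfl
  show ((algebraMap A (reesAlgebra I) a : reesAlgebra I) : A[X]).coeff n ∈ I ^ (n + 1)
  rw [hco, coeff_C]
  split_ifs with h
  · subst h; simpa using ha
  · simp

section mainAux
variable {A : Type} [CommRing A] [IsLocalRing A] [IsNoetherianRing A] (I : Ideal A)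

/-- The constant coefficient map on the Rees algebra. -/
private def auxPhi : reesAlgebra I →+* A :=
  (constantCoeff).comp (Subalgebra.val (reesAlgebra I)).toRingHom

private def auxTheta : reesAlgebra I →+* A ⧸ maximalIdeal A :=
  (Ideal.Quotient.mk (maximalIdeal A)).comp (auxPhi I)

private lemma ker_le_auxTheta (hIm : I ≤ maximalIdeal A) :
    Ideal.map (algebraMap A (reesAlgebra I)) I ≤ RingHom.ker (auxTheta I) := by
  rw [Ideal.map_le_iff_le_comap]
  intro a ha
  have : auxPhi I (algebraMap A (reesAlgebra I) a) = a := by simp [auxPhi]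
  show auxTheta I (algebraMap A (reesAlgebra I) a) = 0
  rw [auxTheta, RingHom.comp_apply, this, Ideal.Quotient.eq_zero_iff_mem]
  exact hIm ha

/-- The canonical map `G_I(A) → A/m`. -/
private def auxThetaBar (hIm : I ≤ maximalIdeal A) : assocGraded I →+* A ⧸ maximalIdeal A :=
  Ideal.Quotient.lift _ (auxTheta I) (fun f hf => RingHom.mem_ker.mp (ker_le_auxTheta I hIm hf))

private lemma auxThetaBar_surjective (hIm : I ≤ maximalIdeal A) :
    Function.Surjective (auxThetaBar I hIm) := by
  intro b
  obtain ⟨a, rfl⟩ := Ideal.Quotient.mk_surjective b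
  refine ⟨Ideal.Quotient.mk _ (algebraMap A (reesAlgebra I) a), ?_⟩
  rw [auxThetaBar, Ideal.Quotient.lift_mk, auxTheta, RingHom.comp_apply]
  congr 1
  simp [auxPhi]

end mainAux

/-- Main argument: given a nonzero element killed by the maximal ideal, the maximal graded
ideal of `G_I(A)` would be an associated prime, contradicting unmixedness. -/
private lemma stmt9_core (A : Type) [CommRing A] [IsLocalRing A] [IsNoetherianRing A]
    (d : ℕ) (hd : 1 ≤ d)
    (I : Ideal A) (hprimary : I.radical = maximalIdeal A)
    (hunmix : UnmixedEquidim (assocGraded I) d)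
    (hy : ∃ y : A, y ≠ 0 ∧ ∀ a ∈ maximalIdeal A, a * y = 0) : False := by
  classical
  obtain ⟨y, hy0, hmy⟩ := hy
  have hIm : I ≤ maximalIdeal A := hprimary ▸ Ideal.le_radical
  have hIt : I ≠ ⊤ := by
    intro h
    have h1 : (1 : A) ∈ maximalIdeal A := hprimary ▸ Ideal.le_radical (h ▸ Submodule.mem_top)
    exact (maximalIdeal.isMaximal A).ne_top (Ideal.eq_top_iff_one _ |>.mpr h1)
  have hbot : (⨅ n : ℕ, I ^ n) = ⊥ := Ideal.iInf_pow_eq_bot_of_isLocalRing I hIt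
  have hex : ∃ n, y ∉ I ^ n := by
    by_contra hc
    push_neg at hc
    have : y ∈ (⨅ n : ℕ, I ^ n) := Submodule.mem_iInf _ |>.mpr hc
    rw [hbot] at this
    exact hy0 (Ideal.mem_bot.mp this)
  set n₀ := Nat.find hex with hn₀def
  have hn₀ : y ∉ I ^ n₀ := Nat.find_spec hex
  have hn₀pos : n₀ ≠ 0 := by
    intro h
    apply hn₀
    rw [h, pow_zero, Ideal.one_eq_top]
    trivial
  set k := n₀ - 1 with hkdef
  have hk1 : k + 1 = n₀ := by omega
  have hyk : y ∈ I ^ k := by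
    by_contra hc
    have h2 : n₀ ≤ k := Nat.find_le hc
    omega
  -- the initial form ξ of y in the associated graded ring
  set K := Ideal.map (algebraMap A (reesAlgebra I)) I with hKdef
  set fξ : reesAlgebra I := ⟨monomial k y, reesAlgebra.monomial_mem.mpr hyk⟩ with hfξ
  set ξ : assocGraded I := Ideal.Quotient.mk K fξ with hξdef
  have hξ0 : ξ ≠ 0 := by
    intro h
    rw [hξdef, Ideal.Quotient.eq_zero_iff_mem] at h
    have := map_le_auxJ I h k
    have hco : (fξ : A[X]).coeff k = y := by simp [hfξ]
    rw [show ((fξ : A[X]).coeff k ∈ I ^ (k+1)) = (y ∈ I ^ (k+1)) by rw [hco]] at this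
    rw [hk1] at this
    exact hn₀ this
  -- every element of the maximal graded ideal annihilates ξ
  have hann : ∀ g, auxThetaBar I hIm g = 0 → g * ξ = 0 := by
    intro g hg
    obtain ⟨f', rfl⟩ := Ideal.Quotient.mk_surjective g
    rw [auxThetaBar, Ideal.Quotient.lift_mk, auxTheta, RingHom.comp_apply,
      Ideal.Quotient.eq_zero_iff_mem] at hg
    have hcoeffm : ∀ m : ℕ, ((f' : A[X]).coeff m) ∈ maximalIdeal A := by
      intro m
      cases m with
      | zero => exact hg
      | succ m =>
        have := f'.2 (m + 1)
        exact hIm (Ideal.pow_le_self (Nat.succ_ne_zero m) this)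
    have hmul0 : (f' : A[X]) * C y = 0 := by
      ext m
      rw [coeff_mul_C, coeff_zero]
      exact hmy _ (hcoeffm m)
    have hprod : f' * fξ = 0 := by
      apply Subtype.ext
      show (f' : A[X]) * (fξ : A[X]) = 0
      have : (fξ : A[X]) = C y * X ^ k := by
        simp [hfξ, C_mul_X_pow_eq_monomial]
      rw [this, ← mul_assoc, hmul0, zero_mul]
    rw [← map_mul, hprod, map_zero]
  -- get an associated prime over the annihilator of ξ
  obtain ⟨P, hP, hle⟩ :=
    exists_le_isAssociatedPrime_of_isNoetherianRing (assocGraded I) ξ hξ0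
  letI : Field (A ⧸ maximalIdeal A) := Ideal.Quotient.field _
  have hMmax : (RingHom.ker (auxThetaBar I hIm)).IsMaximal :=
    RingHom.ker_isMaximal_of_surjective _ (auxThetaBar_surjective I hIm)
  have hMP : RingHom.ker (auxThetaBar I hIm) ≤ P := by
    refine le_trans ?_ hle
    intro g hg
    rw [Submodule.mem_colon_singleton, smul_eq_mul]
    exact hann g hg
  have hPM : RingHom.ker (auxThetaBar I hIm) = P := hMmax.eq_of_le hP.1.ne_top hMP
  have hPmax : P.IsMaximal := hPM ▸ hMmax
  have hdP := hunmix P hP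
  letI : Field (assocGraded I ⧸ P) := @Ideal.Quotient.field (assocGraded I) _ P hPmax
  have h0 : ringKrullDim (assocGraded I ⧸ P) = 0 := ringKrullDim_eq_zero_of_field _
  rw [h0] at hdP
  have : (0 : ℕ) = d := by exact_mod_cast hdP
  omega

/-- If `I` is `m`-primary and `G_I(A)` is unmixed and equidimensional, then
`grade(I,A) > 0`, i.e. `I` contains a nonzerodivisor. -/
theorem stmt9 (A : Type) [CommRing A] [IsLocalRing A] [IsNoetherianRing A]
    (d : ℕ) (hd : 1 ≤ d) (hdim : ringKrullDim A = (d : WithBot ℕ∞))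
    (I : Ideal A) (hprimary : I.radical = maximalIdeal A)
    (hunmix : UnmixedEquidim (assocGraded I) d) :
    ∃ x ∈ I, x ∈ nonZeroDivisors A := by
  by_contra h
  push_neg at h
  exact stmt9_core A d hd I hprimary hunmix (auxExistsY A I hprimary h)

end
end
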